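/- Let ψ be a branching mechanism, strictly increasing on [γ,∞) with lim_{c→∞} ψ(c) = ∞, satisfying the extinction condition. Fix μ ≥ 0 and t > 0, and set p = ψ^{-1}(μ). Then: (i) for every w > 0 the integral ∫_w^∞ dx/( ψ(p+x) − μ ) is finite, and there is a unique w_μ(t) ∈ (0,∞) with ∫_{w_μ(t)}^∞ dx/( ψ(p+x) − μ ) = t; (ii) if for each λ > μ one has v_λ ∈ [0,∞) satisfying ∫_{(q_λ − p)(1 − e^{-v_λ})}^{q_λ − p} dx/( ψ(p+x) − μ ) = t, where q_λ = ψ^{-1}(λ), then lim_{λ→∞} (q_λ − p)(1 − e^{-v_λ}) = w_μ(t). -/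

import Mathlib

open MeasureTheory Real

private lemma exp_term_nonneg {u : ℝ} : 0 ≤ Real.exp (-u) - 1 + u := by
  have := Real.add_one_le_exp (-u); linarith

private lemma exp_term_le {u : ℝ} (hu : 0 ≤ u) : Real.exp (-u) - 1 + u ≤ u ^ 2 := by
  rcases le_or_gt u 1 with h | h
  · have hb := Real.exp_bound (x := -u) (by rw [abs_neg, abs_of_nonneg hu]; exact h) (n := 2)
      (by norm_num)
    simp only [Finset.sum_range_succ, Finset.sum_range_zero, pow_zero, pow_one,
      Nat.factorial, abs_neg, abs_of_nonneg hu] at hb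
    push_cast at hb
    have := abs_le.1 hb
    nlinarith [this.2]
  · have h1 : Real.exp (-u) ≤ 1 := Real.exp_le_one_iff.2 (by linarith)
    nlinarith

private noncomputable def gker (c x : ℝ) : ℝ :=
  Real.exp (-(c * x)) - 1 + (if x < 1 then c * x else 0)

private lemma gker_meas (c : ℝ) : Measurable (gker c) := by
  unfold gker
  exact ((measurable_id.const_mul c).neg.exp.sub measurable_const).add
    (Measurable.ite measurableSet_Iio (measurable_id.const_mul c) measurable_const)

private lemma gker_abs_le {c x : ℝ} (hc : 0 ≤ c) (hx : 0 < x) :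
    |gker c x| ≤ (1 + c ^ 2) * min 1 (x ^ 2) := by
  have hcx : 0 ≤ c * x := mul_nonneg hc hx.le
  unfold gker
  rcases lt_or_ge x 1 with h1 | h1
  · rw [if_pos h1, min_eq_right (by nlinarith)]
    rw [abs_of_nonneg exp_term_nonneg]
    have := exp_term_le hcx
    nlinarith
  · rw [if_neg (not_lt.2 h1), min_eq_left (by nlinarith)]
    have h2 : Real.exp (-(c * x)) ≤ 1 := Real.exp_le_one_iff.2 (by linarith)
    have h3 : 0 < Real.exp (-(c * x)) := Real.exp_pos _
    rw [abs_of_nonpos (by linarith)]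
    nlinarith

variable {ν : Measure ℝ}

private lemma minsq_integrable (hνint : (∫⁻ x, ENNReal.ofReal (min 1 (x ^ 2)) ∂ν) < ⊤) :
    Integrable (fun x => min 1 (x ^ 2)) ν := by
  refine ⟨(measurable_const.min (measurable_id.pow_const 2)).aestronglyMeasurable, ?_⟩
  rw [hasFiniteIntegral_iff_ofReal (ae_of_all _ fun x => le_min one_pos.le (sq_nonneg x))]
  exact hνint

private lemma ae_pos (hν0 : ν (Set.Iic 0) = 0) : ∀ᵐ x ∂ν, 0 < x := by
  have : ∀ᵐ x ∂ν, x ∉ Set.Iic 0 := (MeasureTheory.ae_iff).2 (by simp only [not_not]; exact hν0)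
  filter_upwards [this] with x hx using not_le.1 (by simpa using hx)

private lemma gker_integrable (hν0 : ν (Set.Iic 0) = 0)
    (hνint : (∫⁻ x, ENNReal.ofReal (min 1 (x ^ 2)) ∂ν) < ⊤) {c : ℝ} (hc : 0 ≤ c) :
    Integrable (gker c) ν := by
  refine Integrable.mono' ((minsq_integrable hνint).const_mul (1 + c ^ 2))
    (gker_meas c).aestronglyMeasurable ?_
  filter_upwards [ae_pos hν0] with x hx
  rw [Real.norm_eq_abs]
  exact gker_abs_le hc hx

private lemma gker_convex {x : ℝ} {a b u v : ℝ} (hu : 0 ≤ u) (hv : 0 ≤ v) (huv : u + v = 1) :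
    gker (u * a + v * b) x ≤ u * gker a x + v * gker b x := by
  have hexp := convexOn_exp.2 (Set.mem_univ (-(a * x))) (Set.mem_univ (-(b * x))) hu hv huv
  simp only [smul_eq_mul] at hexp
  have harg : -((u * a + v * b) * x) = u * -(a * x) + v * -(b * x) := by ring
  unfold gker
  rw [harg]
  split_ifs with h
  · nlinarith [hexp]
  · nlinarith [hexp]

private lemma psi_convex {ψ : ℝ → ℝ} {α β : ℝ} {ν : Measure ℝ} (hβ : 0 ≤ β)
    (hν0 : ν (Set.Iic 0) = 0) (hνint : (∫⁻ x, ENNReal.ofReal (min 1 (x ^ 2)) ∂ν) < ⊤)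
    (hform : ∀ c : ℝ, 0 ≤ c → ψ c = α * c + β * c ^ 2
        + ∫ x, (Real.exp (-(c * x)) - 1 + (if x < 1 then c * x else 0)) ∂ν)
    {a b u v : ℝ} (ha : 0 ≤ a) (hb : 0 ≤ b) (hu : 0 ≤ u) (hv : 0 ≤ v) (huv : u + v = 1) :
    ψ (u * a + v * b) ≤ u * ψ a + v * ψ b := by
  have hab : 0 ≤ u * a + v * b := add_nonneg (mul_nonneg hu ha) (mul_nonneg hv hb)
  have hia : Integrable (gker a) ν := gker_integrable hν0 hνint ha
  have hib : Integrable (gker b) ν := gker_integrable hν0 hνint hb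
  have hic : Integrable (gker (u * a + v * b)) ν := gker_integrable hν0 hνint hab
  have key : (∫ x, gker (u * a + v * b) x ∂ν) ≤ u * (∫ x, gker a x ∂ν) + v * ∫ x, gker b x ∂ν := by
    have h1 : (∫ x, gker (u * a + v * b) x ∂ν) ≤ ∫ x, (u * gker a x + v * gker b x) ∂ν := by
      refine integral_mono_ae hic ((hia.const_mul u).add (hib.const_mul v)) ?_
      exact ae_of_all _ fun x => gker_convex hu hv huv
    have h2 : (∫ x, (u * gker a x + v * gker b x) ∂ν)
        = u * (∫ x, gker a x ∂ν) + v * ∫ x, gker b x ∂ν := by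
      rw [integral_add (hia.const_mul u) (hib.const_mul v), integral_const_mul,
        integral_const_mul]
    linarith
  have ea := hform a ha
  have eb := hform b hb
  have ec := hform (u * a + v * b) hab
  have hgk : ∀ c : ℝ, (∫ x, (Real.exp (-(c * x)) - 1 + (if x < 1 then c * x else 0)) ∂ν)
      = ∫ x, gker c x ∂ν := fun c => rfl
  rw [hgk] at ea eb ec
  rw [ec, ea, eb]
  have hsq : β * (u * a + v * b) ^ 2 ≤ u * (β * a ^ 2) + v * (β * b ^ 2) := by
    have hv' : v = 1 - u := by linarith
    subst hv'
    nlinarith [mul_nonneg (mul_nonneg hβ (mul_nonneg hu hv)) (sq_nonneg (a - b))]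
  nlinarith [key, hsq]



/-- `ψ` is a branching mechanism with parameters `(α, β, ν)`:
`ψ(c) = αc + βc² + ∫ (e^{-cx} - 1 + cx 1_{x<1}) ν(dx)` for all `c ≥ 0`, where `β ≥ 0` and
`ν` is a measure on `(0,∞)` with `∫ min(1,x²) ν(dx) < ∞`. -/
def IsBMWith (ψ : ℝ → ℝ) (α β : ℝ) (ν : Measure ℝ) : Prop :=
  0 ≤ β ∧ ν (Set.Iic 0) = 0 ∧ (∫⁻ x, ENNReal.ofReal (min 1 (x ^ 2)) ∂ν) < ⊤ ∧
    ∀ c : ℝ, 0 ≤ c →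
      ψ c = α * c + β * c ^ 2
        + ∫ x, (Real.exp (-(c * x)) - 1 + (if x < 1 then c * x else 0)) ∂ν

/-- `ψ` is a branching mechanism: it is of Lévy–Khintchine form for some parameters. -/
def IsBranchingMechanism (ψ : ℝ → ℝ) : Prop :=
  ∃ (α β : ℝ) (ν : Measure ℝ), IsBMWith ψ α β ν

/-- For a branching mechanism `ψ` strictly increasing on `[γ,∞)` (`γ` its largest root) with
`ψ(c) → ∞`, satisfying the extinction condition `∫^∞ dc/ψ(c) < ∞`, and for `μ ≥ 0`, `t > 0`
(writing `p = ψ^{-1}(μ)`): (i) for every `w > 0` the integral `∫_w^∞ dx/(ψ(p+x)-μ)` is finite,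
and there is a unique `w = w_μ(t) > 0` with `∫_w^∞ dx/(ψ(p+x)-μ) = t`; (ii) if
`v_λ ≥ 0` satisfies `∫_{(q_λ-p)(1-e^{-v_λ})}^{q_λ-p} dx/(ψ(p+x)-μ) = t` for every `λ > μ`,
where `q_λ = ψ^{-1}(λ)`, then `(q_λ-p)(1-e^{-v_λ}) → w_μ(t)` as `λ → ∞`. -/
theorem extinction_integral_limit (ψ : ℝ → ℝ) (hψ : IsBranchingMechanism ψ) (γ : ℝ)
    (hγ0 : 0 ≤ γ) (hγroot : ψ γ = 0) (hγlargest : ∀ c : ℝ, 0 ≤ c → ψ c ≤ 0 → c ≤ γ)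
    (hmono : StrictMonoOn ψ (Set.Ici γ))
    (htop : Filter.Tendsto ψ Filter.atTop Filter.atTop)
    (hext : ∃ c₀ : ℝ, γ < c₀ ∧ MeasureTheory.IntegrableOn (fun c => (ψ c)⁻¹) (Set.Ioi c₀))
    (ψinv : ℝ → ℝ) (hinv₁ : ∀ y : ℝ, 0 ≤ y → γ ≤ ψinv y ∧ ψ (ψinv y) = y)
    (hinv₂ : ∀ c : ℝ, γ ≤ c → ψinv (ψ c) = c)
    (μ t : ℝ) (hμ : 0 ≤ μ) (ht : 0 < t) :
    (∀ w : ℝ, 0 < w →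
      MeasureTheory.IntegrableOn (fun x => (ψ (ψinv μ + x) - μ)⁻¹) (Set.Ioi w)) ∧
    ∃ w : ℝ,
      (0 < w ∧ (∫ x in Set.Ioi w, (ψ (ψinv μ + x) - μ)⁻¹) = t) ∧
      (∀ w' : ℝ, 0 < w' → (∫ x in Set.Ioi w', (ψ (ψinv μ + x) - μ)⁻¹) = t → w' = w) ∧
      (∀ v : ℝ → ℝ,
        (∀ lam : ℝ, μ < lam → 0 ≤ v lam ∧
          (∫ x in ((ψinv lam - ψinv μ) * (1 - Real.exp (-(v lam))))..(ψinv lam - ψinv μ),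
            (ψ (ψinv μ + x) - μ)⁻¹) = t) →
        Filter.Tendsto (fun lam => (ψinv lam - ψinv μ) * (1 - Real.exp (-(v lam))))
          Filter.atTop (nhds w)) := by
  obtain ⟨α, β, ν, hβ, hν0, hνint, hform⟩ := hψ
  obtain ⟨c₀, hc₀γ, hc₀int⟩ := hext
  set p := ψinv μ with hpdef
  have hpγ : γ ≤ p := (hinv₁ μ hμ).1
  have hψp : ψ p = μ := (hinv₁ μ hμ).2
  have hp0 : 0 ≤ p := hγ0.trans hpγ
  set f : ℝ → ℝ := fun x => (ψ (p + x) - μ)⁻¹ with hfdef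
  -- basic monotonicity facts
  have hgt : ∀ x : ℝ, 0 < x → μ < ψ (p + x) := by
    intro x hx
    have : γ ≤ p + x := by linarith
    have := hmono (Set.mem_Ici.2 hpγ) (Set.mem_Ici.2 this) (by linarith)
    rwa [hψp] at this
  have hfpos : ∀ x : ℝ, 0 < x → 0 < f x := fun x hx => inv_pos.2 (sub_pos.2 (hgt x hx))
  have hfanti : ∀ x y : ℝ, 0 < x → x ≤ y → f y ≤ f x := by
    intro x y hx hxy
    have h1 : ψ (p + x) ≤ ψ (p + y) :=
      hmono.monotoneOn (Set.mem_Ici.2 (by linarith)) (Set.mem_Ici.2 (by linarith)) (by linarith)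
    have h2 : 0 < ψ (p + x) - μ := sub_pos.2 (hgt x hx)
    exact inv_anti₀ h2 (by linarith)
  -- measurability
  have hψmeas : Measurable fun x : ℝ => ψ (p + max x 0) := by
    apply Monotone.measurable
    intro x y hxy
    have h1 : γ ≤ p + max x 0 := le_add_of_nonneg_right (le_max_right x 0) |>.trans' hpγ
    have h2 : γ ≤ p + max y 0 := le_add_of_nonneg_right (le_max_right y 0) |>.trans' hpγ
    exact hmono.monotoneOn (Set.mem_Ici.2 h1) (Set.mem_Ici.2 h2) (by gcongr)
  have hfaesm : ∀ s : Set ℝ, s ⊆ Set.Ioi 0 → AEStronglyMeasurable f (volume.restrict s) := by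
    intro s hs
    have hmeas : Measurable fun x : ℝ => (ψ (p + max x 0) - μ)⁻¹ :=
      (hψmeas.sub measurable_const).inv
    have h0 : AEStronglyMeasurable f (volume.restrict (Set.Ioi (0:ℝ))) := by
      refine hmeas.aestronglyMeasurable.congr ?_
      rw [Filter.EventuallyEq, ae_restrict_iff' measurableSet_Ioi]
      filter_upwards with x hx
      simp only [hfdef, max_eq_left (le_of_lt (Set.mem_Ioi.1 hx))]
    exact h0.mono_measure (Measure.restrict_mono hs le_rfl)
  -- integrability of f on (w, ∞) for w > 0
  obtain ⟨N, hN⟩ := Filter.eventually_atTop.1 (Filter.tendsto_atTop.1 htop (2 * μ + 1))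
  have hInt : ∀ w : ℝ, 0 < w → IntegrableOn f (Set.Ioi w) := by
    intro w hw
    set M : ℝ := max w (max (c₀ + 1 - p) (N - p)) with hMdef
    have hwM : w ≤ M := le_max_left _ _
    have hIoc : IntegrableOn f (Set.Ioc w M) := by
      refine Integrable.mono' (g := fun _ => (ψ (p + w) - μ)⁻¹)
        (integrableOn_const measure_Ioc_lt_top.ne)
        (hfaesm _ (fun x hx => Set.mem_Ioi.2 (hw.trans hx.1))) ?_
      rw [ae_restrict_iff' measurableSet_Ioc]
      filter_upwards with x hx
      rw [Real.norm_eq_abs, abs_of_nonneg (hfpos x (hw.trans hx.1)).le]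
      exact hfanti w x hw hx.1.le
    have htrans : IntegrableOn (fun x => (ψ (p + x))⁻¹) (Set.Ioi (c₀ - p)) := by
      have hind : Integrable ((Set.Ioi c₀).indicator fun c => (ψ c)⁻¹) :=
        (integrable_indicator_iff measurableSet_Ioi).2 hc₀int
      have hcomp : Integrable (((Set.Ioi c₀).indicator fun c => (ψ c)⁻¹) ∘ (fun x => p + x)) :=
        ((measurePreserving_add_left volume p).integrable_comp hind.aestronglyMeasurable).2 hind
      refine (hcomp.integrableOn).congr_fun ?_ measurableSet_Ioi
      intro x hx
      have : p + x ∈ Set.Ioi c₀ := by simp only [Set.mem_Ioi] at hx ⊢; linarith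
      simp [Function.comp, Set.indicator_of_mem this]
    have hIoi : IntegrableOn f (Set.Ioi M) := by
      have hsub : Set.Ioi M ⊆ Set.Ioi (c₀ - p) := Set.Ioi_subset_Ioi (by
        have := le_max_left (c₀ + 1 - p) (N - p)
        have := le_max_right w (max (c₀ + 1 - p) (N - p))
        simp only [hMdef]; linarith)
      refine Integrable.mono' (g := fun x => 2 * (ψ (p + x))⁻¹)
        ((htrans.mono_set hsub).const_mul 2)
        (hfaesm _ (fun x hx => Set.mem_Ioi.2 (lt_of_le_of_lt (hw.le.trans hwM) hx))) ?_
      rw [ae_restrict_iff' measurableSet_Ioi]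
      filter_upwards with x hx
      rw [Set.mem_Ioi] at hx
      have hxw : 0 < x := lt_of_le_of_lt (hw.le.trans hwM) hx
      have hxN : N ≤ p + x := by
        have h1 : N - p ≤ M := le_trans (le_max_right _ _) (le_max_right _ _)
        linarith
      have hψx : 2 * μ + 1 ≤ ψ (p + x) := hN _ hxN
      have h2 : 0 < ψ (p + x) - μ := sub_pos.2 (hgt x hxw)
      rw [Real.norm_eq_abs, abs_of_nonneg (hfpos x hxw).le]
      have hhalf : ψ (p + x) / 2 ≤ ψ (p + x) - μ := by linarith
      have h3 : 0 < ψ (p + x) / 2 := by linarith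
      calc f x = (ψ (p + x) - μ)⁻¹ := rfl
        _ ≤ (ψ (p + x) / 2)⁻¹ := inv_anti₀ h3 hhalf
        _ = 2 * (ψ (p + x))⁻¹ := by field_simp
    have := hIoc.union hIoi
    rwa [Set.Ioc_union_Ioi_eq_Ioi hwM] at this
  set F : ℝ → ℝ := fun w => ∫ x in Set.Ioi w, f x with hFdef
  have hFsplit : ∀ w w' : ℝ, 0 < w → w ≤ w' →
      F w = (∫ x in Set.Ioc w w', f x) + F w' := by
    intro w w' hw hww'
    have hdisj : Disjoint (Set.Ioc w w') (Set.Ioi w') := by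
      rw [Set.disjoint_left]
      intro x hx hx'
      exact absurd hx.2 (not_le.2 hx')
    rw [hFdef]
    simp only
    rw [← setIntegral_union hdisj measurableSet_Ioi
      ((hInt w hw).mono_set Set.Ioc_subset_Ioi_self) (hInt w' (lt_of_lt_of_le hw hww')),
      Set.Ioc_union_Ioi_eq_Ioi hww']
  have hIocnn : ∀ w w' : ℝ, 0 < w → 0 ≤ ∫ x in Set.Ioc w w', f x := by
    intro w w' hw
    refine setIntegral_nonneg measurableSet_Ioc fun x hx => (hfpos x (hw.trans hx.1)).le
  have hFnonneg : ∀ w : ℝ, 0 < w → 0 ≤ F w := by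
    intro w hw
    exact setIntegral_nonneg measurableSet_Ioi fun x hx => (hfpos x (hw.trans hx)).le
  have hFanti : ∀ w w' : ℝ, 0 < w → w ≤ w' → F w' ≤ F w := by
    intro w w' hw hww'
    rw [hFsplit w w' hw hww']
    have := hIocnn w w' hw
    linarith
  have hIoclb : ∀ w w' : ℝ, 0 < w → w ≤ w' →
      f w' * (w' - w) ≤ ∫ x in Set.Ioc w w', f x := by
    intro w w' hw hww'
    have h1 : (∫ _ in Set.Ioc w w', f w') ≤ ∫ x in Set.Ioc w w', f x := by
      refine setIntegral_mono_on (integrableOn_const measure_Ioc_lt_top.ne)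
        ((hInt w hw).mono_set Set.Ioc_subset_Ioi_self) measurableSet_Ioc ?_
      intro x hx
      exact hfanti x w' (hw.trans hx.1) hx.2
    rw [setIntegral_const, Real.volume_real_Ioc_of_le hww',
      smul_eq_mul, mul_comm] at h1
    exact h1
  have hFstrict : ∀ w w' : ℝ, 0 < w → w < w' → F w' < F w := by
    intro w w' hw hww'
    rw [hFsplit w w' hw hww'.le]
    have h1 := hIoclb w w' hw hww'.le
    have h2 : 0 < f w' * (w' - w) := mul_pos (hfpos w' (hw.trans hww')) (by linarith)
    linarith
  have hFpos : ∀ w : ℝ, 0 < w → 0 < F w := by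
    intro w hw
    have := hFstrict w (w + 1) hw (by linarith)
    have := hFnonneg (w + 1) (by linarith)
    linarith
  -- upper bound on Ioc integrals gives local Lipschitz continuity
  have hIocub : ∀ w₁ w w' : ℝ, 0 < w₁ → w₁ ≤ w → w ≤ w' →
      (∫ x in Set.Ioc w w', f x) ≤ f w₁ * (w' - w) := by
    intro w₁ w w' h1 h2 h3
    have hw : 0 < w := lt_of_lt_of_le h1 h2
    have hub : (∫ x in Set.Ioc w w', f x) ≤ ∫ _ in Set.Ioc w w', f w₁ := by
      refine setIntegral_mono_on ((hInt w hw).mono_set Set.Ioc_subset_Ioi_self)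
        (integrableOn_const measure_Ioc_lt_top.ne) measurableSet_Ioc ?_
      intro x hx
      exact hfanti w₁ x h1 (h2.trans hx.1.le)
    rwa [setIntegral_const, Real.volume_real_Ioc_of_le h3,
      smul_eq_mul, mul_comm (w' - w)] at hub
  have hFcont : ∀ w₁ w₂ : ℝ, 0 < w₁ → ContinuousOn F (Set.Icc w₁ w₂) := by
    intro w₁ w₂ hw₁
    have hlip : LipschitzOnWith (Real.toNNReal (f w₁)) F (Set.Icc w₁ w₂) := by
      refine LipschitzOnWith.of_dist_le_mul ?_
      intro x hx y hy
      wlog hxy : y ≤ x generalizing x y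
      · rw [dist_comm x y, dist_comm (F x) (F y)]
        exact this y hy x hx (le_of_not_ge hxy)
      have hy0 : 0 < y := lt_of_lt_of_le hw₁ hy.1
      rw [Real.dist_eq, Real.dist_eq, abs_of_nonpos (by
          have := hFanti y x hy0 hxy; linarith),
        abs_of_nonneg (by linarith)]
      have hsp := hFsplit y x hy0 hxy
      have hub := hIocub w₁ y x hw₁ hy.1 hxy
      have hle : f w₁ * (x - y) ≤ Real.toNNReal (f w₁) * (x - y) :=
        mul_le_mul_of_nonneg_right (Real.le_coe_toNNReal _) (by linarith)
      linarith
    exact hlip.continuousOn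
  -- lower bound via convexity: divergence near zero
  set C : ℝ := ψ (p + 1) - μ with hCdef
  have hC : 0 < C := sub_pos.2 (hgt 1 one_pos)
  have hconv : ∀ x : ℝ, 0 < x → x ≤ 1 → ψ (p + x) - μ ≤ x * C := by
    intro x hx hx1
    have h := psi_convex hβ hν0 hνint hform (a := p) (b := p + 1) (u := 1 - x) (v := x)
      hp0 (by linarith) (by linarith) hx.le (by ring)
    have harg : (1 - x) * p + x * (p + 1) = p + x := by ring
    rw [harg, hψp] at h
    simp only [hCdef]
    nlinarith
  have hflow : ∀ x : ℝ, 0 < x → x ≤ 1 → (x * C)⁻¹ ≤ f x := by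
    intro x hx hx1
    exact inv_anti₀ (sub_pos.2 (hgt x hx)) (hconv x hx hx1)
  have hgeq : (fun x : ℝ => (x * C)⁻¹) = fun x : ℝ => C⁻¹ * x⁻¹ := by
    funext x; rw [mul_inv, mul_comm]
  have hlow : ∀ w m : ℝ, 0 < w → w ≤ m → m ≤ 1 →
      (Real.log m - Real.log w) / C ≤ ∫ x in Set.Ioc w m, f x := by
    intro w m hw hwm hm1
    have huIcc : (0 : ℝ) ∉ Set.uIcc w m := by
      rw [Set.uIcc_of_le hwm]
      intro h
      exact absurd h.1 (not_le.2 hw)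
    have hIinv : IntegrableOn (fun x : ℝ => x⁻¹) (Set.Ioc w m) :=
      (intervalIntegrable_inv_iff.2 (Or.inr huIcc)).1
    have hIg : IntegrableOn (fun x : ℝ => (x * C)⁻¹) (Set.Ioc w m) := by
      rw [hgeq]; exact hIinv.const_mul _
    have hIf : IntegrableOn f (Set.Ioc w m) := (hInt w hw).mono_set Set.Ioc_subset_Ioi_self
    have hmono2 : (∫ x in Set.Ioc w m, (x * C)⁻¹) ≤ ∫ x in Set.Ioc w m, f x := by
      refine setIntegral_mono_on hIg hIf measurableSet_Ioc ?_
      intro x hx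
      exact hflow x (hw.trans hx.1) (hx.2.trans hm1)
    have hcomp : (∫ x in Set.Ioc w m, (x * C)⁻¹) = C⁻¹ * (Real.log m - Real.log w) := by
      rw [hgeq, integral_const_mul]
      congr 1
      rw [← intervalIntegral.integral_of_le hwm, integral_inv huIcc,
        Real.log_div (by linarith) (by linarith)]
    rw [div_eq_inv_mul]
    linarith [hmono2, hcomp.symm.le]
  have hFlow : ∀ w : ℝ, 0 < w → w ≤ 1 → (- Real.log w) / C ≤ F w := by
    intro w hw hw1
    have h1 := hlow w 1 hw hw1 le_rfl
    rw [Real.log_one] at h1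
    have h2 := hFsplit w 1 hw hw1
    have h3 := hFnonneg 1 one_pos
    rw [zero_sub] at h1
    linarith
  -- F tends to 0 at infinity
  have hF0key : ∀ ε : ℝ, 0 < ε → ∃ b : ℝ, 1 ≤ b ∧ ∀ w : ℝ, b ≤ w → F w < ε := by
    intro ε hε
    set s : ℕ → Set ℝ := fun n => Set.Ioc 1 (1 + n) with hsdef
    have hsm : ∀ n, MeasurableSet (s n) := fun n => measurableSet_Ioc
    have hsmono : Monotone s := by
      intro n m hnm
      refine Set.Ioc_subset_Ioc_right ?_
      have : (n : ℝ) ≤ m := Nat.cast_le.2 hnm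
      linarith
    have hUn : (⋃ n, s n) = Set.Ioi 1 := by
      ext x
      simp only [hsdef, Set.mem_iUnion, Set.mem_Ioc, Set.mem_Ioi]
      constructor
      · rintro ⟨n, h1, _⟩; exact h1
      · intro h1
        obtain ⟨n, hn⟩ := exists_nat_ge (x - 1)
        exact ⟨n, h1, by linarith⟩
    have htend := tendsto_setIntegral_of_monotone (f := f) (μ := volume) hsm hsmono
      (by rw [hUn]; exact hInt 1 one_pos)
    rw [hUn] at htend
    have hev := htend.eventually (eventually_gt_nhds (show F 1 - ε < F 1 by linarith))
    obtain ⟨n, hn⟩ := hev.exists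
    refine ⟨1 + n, by linarith [Nat.cast_nonneg (α := ℝ) n], ?_⟩
    intro w hw
    have h1n : (0:ℝ) < 1 + n := by positivity
    have hFw : F w ≤ F (1 + n) := hFanti (1 + n) w h1n hw
    have hsp := hFsplit 1 (1 + n) one_pos (by linarith [Nat.cast_nonneg (α := ℝ) n])
    have : F 1 - ε < ∫ x in Set.Ioc 1 (1 + (n:ℝ)), f x := hn
    linarith
  -- existence of w with F w = t
  obtain ⟨w₂, hw₂1, hw₂⟩ := hF0key t ht
  set w₁ : ℝ := min w₂ (Real.exp (-(t * C))) with hw₁def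
  have hw₁pos : 0 < w₁ := lt_min (by linarith) (Real.exp_pos _)
  have hw₁le : w₁ ≤ Real.exp (-(t * C)) := min_le_right _ _
  have hexp1 : Real.exp (-(t * C)) ≤ 1 := by
    rw [Real.exp_le_one_iff]
    nlinarith
  have hw₁1 : w₁ ≤ 1 := hw₁le.trans hexp1
  have hFw₁ : t ≤ F w₁ := by
    have hlog : Real.log w₁ ≤ -(t * C) := by
      calc Real.log w₁ ≤ Real.log (Real.exp (-(t * C))) := by
            exact Real.log_le_log hw₁pos hw₁le
        _ = -(t * C) := Real.log_exp _
    have h1 := hFlow w₁ hw₁pos hw₁1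
    have h2 : t ≤ (- Real.log w₁) / C := by
      rw [le_div_iff₀ hC]
      linarith
    linarith
  have hw₁₂ : w₁ ≤ w₂ := min_le_left _ _
  obtain ⟨w, hwmem, hFw⟩ := intermediate_value_Icc' hw₁₂ (hFcont w₁ w₂ hw₁pos)
    (Set.mem_Icc.2 ⟨(hw₂ w₂ le_rfl).le, hFw₁⟩)
  have hwpos : 0 < w := lt_of_lt_of_le hw₁pos hwmem.1
  -- uniqueness
  have huniq : ∀ w' : ℝ, 0 < w' → F w' = t → w' = w := by
    intro w' hw' hFw'
    rcases lt_trichotomy w' w with h | h | h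
    · have := hFstrict w' w hw' h
      rw [hFw, hFw'] at this
      exact absurd this (lt_irrefl t)
    · exact h
    · have := hFstrict w w' hwpos h
      rw [hFw, hFw'] at this
      exact absurd this (lt_irrefl t)
  -- behaviour of ψinv at infinity
  have hbtop : Filter.Tendsto (fun lam => ψinv lam - p) Filter.atTop Filter.atTop := by
    rw [Filter.tendsto_atTop]
    intro K
    filter_upwards [Filter.eventually_gt_atTop (ψ (max (K + p) γ)),
      Filter.eventually_gt_atTop μ] with lam h1 h2
    have h0 : 0 ≤ lam := hμ.trans h2.le
    have hq1 := (hinv₁ lam h0).1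
    have hq2 := (hinv₁ lam h0).2
    have hKq : K + p < ψinv lam := by
      by_contra h
      push_neg at h
      have : ψ (ψinv lam) ≤ ψ (max (K + p) γ) :=
        hmono.monotoneOn (Set.mem_Ici.2 hq1) (Set.mem_Ici.2 (le_max_right _ _))
          (h.trans (le_max_left _ _))
      rw [hq2] at this
      linarith
    linarith
  have hFtend0 : Filter.Tendsto F Filter.atTop (nhds 0) := by
    rw [Metric.tendsto_atTop]
    intro ε hε
    obtain ⟨b₀, hb₀1, hb₀⟩ := hF0key ε hε
    refine ⟨b₀, fun w' hw' => ?_⟩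
    rw [Real.dist_eq, sub_zero, abs_of_nonneg (hFnonneg w' (by linarith))]
    exact hb₀ w' hw'
  have hFbtend : Filter.Tendsto (fun lam => F (ψinv lam - p)) Filter.atTop (nhds 0) :=
    hFtend0.comp hbtop
  refine ⟨fun w' hw' => hInt w' hw', w, ⟨hwpos, hFw⟩, huniq, ?_⟩
  intro v hv
  set a : ℝ → ℝ := fun lam => (ψinv lam - p) * (1 - Real.exp (-(v lam))) with hadef
  have hkey : ∀ lam : ℝ, μ < lam →
      0 < a lam ∧ F (a lam) = t + F (ψinv lam - p) ∧ a lam < w := by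
    intro lam hlam
    obtain ⟨hv0, hvint⟩ := hv lam hlam
    rw [show (ψinv lam - p) * (1 - Real.exp (-(v lam))) = a lam from rfl] at hvint
    have h0lam : 0 ≤ lam := hμ.trans hlam.le
    have hqγ := (hinv₁ lam h0lam).1
    have hqψ := (hinv₁ lam h0lam).2
    have hbpos : 0 < ψinv lam - p := by
      by_contra h
      push_neg at h
      have : ψ (ψinv lam) ≤ ψ p :=
        hmono.monotoneOn (Set.mem_Ici.2 hqγ) (Set.mem_Ici.2 hpγ) (by linarith)
      rw [hqψ, hψp] at this
      linarith
    have hexple : Real.exp (-(v lam)) ≤ 1 := Real.exp_le_one_iff.2 (neg_nonpos.2 hv0)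
    have hexppos : 0 < Real.exp (-(v lam)) := Real.exp_pos _
    have ha0 : 0 ≤ a lam := mul_nonneg hbpos.le (by linarith)
    have hab : a lam < ψinv lam - p := by
      have : (ψinv lam - p) * (1 - Real.exp (-(v lam))) < (ψinv lam - p) * 1 :=
        mul_lt_mul_of_pos_left (by linarith) hbpos
      simpa [hadef] using this
    have hapos : 0 < a lam := by
      rcases eq_or_lt_of_le ha0 with heq | h
      · exfalso
        rw [← heq] at hvint
        by_cases hii : IntervalIntegrable f volume 0 (ψinv lam - p)
        · have hione : IntegrableOn f (Set.Ioc 0 (ψinv lam - p)) := hii.1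
          have h3 : (∫ x in Set.Ioc 0 (ψinv lam - p), f x) = t := by
            rw [← intervalIntegral.integral_of_le hbpos.le]
            exact hvint
          set m : ℝ := min 1 (ψinv lam - p) with hmdef
          have hm0 : 0 < m := lt_min one_pos hbpos
          have hm1 : m ≤ 1 := min_le_left _ _
          set w0 : ℝ := Real.exp (Real.log m - (t + 1) * C) with hw0def
          have hw0pos : 0 < w0 := Real.exp_pos _
          have hw0m : w0 < m := by
            calc w0 < Real.exp (Real.log m) := Real.exp_lt_exp.2 (by nlinarith)
              _ = m := Real.exp_log hm0
          have hlogc : (Real.log m - Real.log w0) / C = t + 1 := by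
            rw [hw0def, Real.log_exp]
            rw [sub_sub_cancel, mul_div_assoc, div_self hC.ne', mul_one]
          have h1 := hlow w0 m hw0pos hw0m.le hm1
          have h2 : (∫ x in Set.Ioc w0 m, f x) ≤ ∫ x in Set.Ioc 0 (ψinv lam - p), f x := by
            refine setIntegral_mono_set hione ?_ ?_
            · exact (ae_restrict_iff' measurableSet_Ioc).2
                (Filter.Eventually.of_forall fun x hx => (hfpos x hx.1).le)
            · exact (Set.Ioc_subset_Ioc hw0pos.le (min_le_right _ _)).eventuallyLE
          rw [hlogc] at h1
          linarith
        · rw [intervalIntegral.integral_undef hii] at hvint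
          linarith
      · exact h
    have hiab : (∫ x in Set.Ioc (a lam) (ψinv lam - p), f x) = t := by
      rw [← intervalIntegral.integral_of_le hab.le]
      exact hvint
    have hFa : F (a lam) = t + F (ψinv lam - p) := by
      rw [hFsplit (a lam) (ψinv lam - p) hapos hab.le, hiab]
    refine ⟨hapos, hFa, ?_⟩
    have hFbpos := hFpos (ψinv lam - p) hbpos
    have : F w < F (a lam) := by rw [hFa, hFw]; linarith
    by_contra h
    push_neg at h
    exact absurd (hFanti w (a lam) hwpos h) (not_le.2 this)
  rw [tendsto_order]
  constructor
  · intro u hu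
    rcases le_or_gt u 0 with hu0 | hu0
    · filter_upwards [Filter.eventually_gt_atTop μ] with lam hlam
      exact lt_of_le_of_lt hu0 (hkey lam hlam).1
    · have hFu : t < F u := by
        have := hFstrict u w hu0 hu
        rwa [hFw] at this
      filter_upwards [hFbtend.eventually (eventually_lt_nhds
        (show (0:ℝ) < F u - t by linarith)), Filter.eventually_gt_atTop μ] with lam h1 h2
      obtain ⟨hapos, hFa, _⟩ := hkey lam h2
      have hlt : F (a lam) < F u := by rw [hFa]; linarith
      by_contra h
      push_neg at h
      exact absurd (hFanti (a lam) u hapos h) (not_le.2 hlt)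
  · intro u hu
    filter_upwards [Filter.eventually_gt_atTop μ] with lam hlam
    exact lt_trans (hkey lam hlam).2.2 hu
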